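/- If R is a right hereditary ring, M is a right R-module, K is in the subprojectivity domain of M, and N is a submodule of K, then N is in the subprojectivity domain of M. -/

import Mathlib

/-- `M` is `N`-subprojective: every homomorphism `M → N` lifts through every
epimorphism onto `N`. -/
def Subprojective (R : Type) [Ring R] (M N : Type) [AddCommGroup M] [Module R M]
    [AddCommGroup N] [Module R N] : Prop :=
  ∀ (B : Type) [AddCommGroup B] [Module R B] (g : B →ₗ[R] N),
    Function.Surjective g → ∀ f : M →ₗ[R] N, ∃ h : M →ₗ[R] B, g ∘ₗ h = f

theorem stmt_10 (R : Type) [Ring R]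
    (hered : ∀ (P : Type) (_ : AddCommGroup P) (_ : Module R P),
      Module.Projective R P → ∀ S : Submodule R P, Module.Projective R S)
    (M K : Type) [AddCommGroup M] [Module R M] [AddCommGroup K] [Module R K]
    (hK : Subprojective R M K) (N : Submodule R K) :
    Subprojective R M N := by
  intro B _ _ g hg f
  classical
  set F := K →₀ R with hF
  set π : F →ₗ[R] K := Finsupp.linearCombination R id with hπdef
  have hπ : Function.Surjective π := fun k => ⟨Finsupp.single k 1, by rw [hπdef, Finsupp.linearCombination_single, one_smul]; rfl⟩
  set F' : Submodule R F := Submodule.comap π N with hF'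
  have hFproj : Module.Projective R F := inferInstance
  have hF'proj : Module.Projective R F' := hered F inferInstance inferInstance hFproj F'
  obtain ⟨h, hh⟩ := hK F π hπ (N.subtype ∘ₗ f)
  have hval : ∀ m, π (h m) = (f m : K) := by
    intro m
    have := congrArg (fun t => t m) hh
    simpa using this
  have hmem : ∀ m, h m ∈ F' := fun m => by
    show π (h m) ∈ N
    rw [hval]; exact (f m).2
  set h' : M →ₗ[R] F' := LinearMap.codRestrict F' h hmem with hh'
  set πres : F' →ₗ[R] N := (π ∘ₗ F'.subtype).codRestrict N (fun x => x.2) with hπres'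
  have hπres : Function.Surjective πres := by
    intro n
    obtain ⟨x, hx⟩ := hπ (n : K)
    refine ⟨⟨x, ?_⟩, Subtype.ext ?_⟩
    · show π x ∈ N; rw [hx]; exact n.2
    · exact hx
  obtain ⟨φ, hφ⟩ := Module.projective_lifting_property g πres hg
  refine ⟨φ ∘ₗ h', ?_⟩
  ext m
  have h1 : g (φ (h' m)) = πres (h' m) := congrArg (fun t => t (h' m)) hφ
  have h2 : (πres (h' m) : K) = π (h m) := rfl
  simp only [LinearMap.comp_apply]
  rw [h1]
  exact congrArg Subtype.val (Subtype.ext (h2.trans (hval m)) : πres (h' m) = f m)
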